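/- Let V ⊆ ℝ^n be a nonempty closed convex set with diameter at most K (i.e., ‖u − v‖₂ ≤ K for all u, v ∈ V). Let ℓ_1, …, ℓ_T : ℝ^n → ℝ be functions, each convex on V and differentiable on an open set containing V, and suppose ‖∇ℓ_t(w)‖₂ ≤ G for all w ∈ V and all t ∈ [T], where G > 0. Pick any w_1 ∈ V and define iterates by w_{t+1} = Π_V(w_t − η_t ∇ℓ_t(w_t)) with step sizes η_t = K/(G√t), where Π_V denotes the Euclidean projection (nearest-point map) onto V. Then for every u ∈ V, ∑_{t=1}^T (ℓ_t(w_t) − ℓ_t(u)) ≤ (3/2) · G · K · √T. -/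

import Mathlib

open scoped RealInnerProductSpace


lemma sum_one_div_sqrt_le (T : ℕ) :
    ∑ t ∈ Finset.Icc 1 T, 1 / Real.sqrt t ≤ 2 * Real.sqrt T := by
  induction T with
  | zero => simp
  | succ S ih =>
    rw [Finset.sum_Icc_succ_top (Nat.one_le_iff_ne_zero.mpr (Nat.succ_ne_zero S))]
    have h1 : Real.sqrt S ^ 2 = (S : ℝ) := Real.sq_sqrt (Nat.cast_nonneg S)
    have h2 : Real.sqrt ((S+1:ℕ):ℝ) ^ 2 = ((S+1:ℕ):ℝ) := Real.sq_sqrt (by positivity)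
    have h3 : (0:ℝ) < Real.sqrt ((S+1:ℕ):ℝ) := Real.sqrt_pos.mpr (by positivity)
    have h4 : (0:ℝ) ≤ Real.sqrt S := Real.sqrt_nonneg _
    have key : 1 / Real.sqrt ((S+1:ℕ):ℝ) ≤ 2 * Real.sqrt ((S+1:ℕ):ℝ) - 2 * Real.sqrt S := by
      rw [div_le_iff₀ h3]
      push_cast at h2 ⊢
      nlinarith [sq_nonneg (Real.sqrt ((S:ℝ)+1) - Real.sqrt S)]
    push_cast at *
    linarith

lemma proj_nonexpand {E : Type*} [NormedAddCommGroup E] [InnerProductSpace ℝ E]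
    {V : Set E} (hVconv : Convex ℝ V)
    {proj : E → E} (hproj : ∀ z, proj z ∈ V ∧ ∀ v ∈ V, ‖z - proj z‖ ≤ ‖z - v‖)
    (z : E) {u : E} (hu : u ∈ V) : ‖proj z - u‖ ≤ ‖z - u‖ := by
  obtain ⟨hp, hmin⟩ := hproj z
  have hne : Nonempty V := ⟨⟨_, hp⟩⟩
  have heq : ‖z - proj z‖ = ⨅ w : V, ‖z - w‖ := by
    apply le_antisymm
    · exact le_ciInf fun w => hmin w w.2
    · have hbdd : BddBelow (Set.range fun w : V => ‖z - (w : E)‖) :=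
        ⟨0, by rintro x ⟨w, rfl⟩; exact norm_nonneg _⟩
      exact ciInf_le hbdd ⟨_, hp⟩
  have hinner : ⟪z - proj z, u - proj z⟫ ≤ 0 :=
    (norm_eq_iInf_iff_real_inner_le_zero hVconv hp).mp heq u hu
  have hexp : ‖z - u‖ ^ 2 = ‖z - proj z‖ ^ 2 + 2 * ⟪z - proj z, proj z - u⟫ + ‖proj z - u‖ ^ 2 := by
    have := @norm_add_sq_real E _ _ (z - proj z) (proj z - u)
    rw [show z - proj z + (proj z - u) = z - u by abel] at this
    linarith [this]
  have h2 : ⟪z - proj z, proj z - u⟫ = - ⟪z - proj z, u - proj z⟫ := by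
    rw [← inner_neg_right]; congr 1; abel
  have hsq : ‖proj z - u‖ ^ 2 ≤ ‖z - u‖ ^ 2 := by
    rw [hexp, h2]; nlinarith [sq_nonneg ‖z - proj z‖]
  calc ‖proj z - u‖ = Real.sqrt (‖proj z - u‖ ^ 2) := (Real.sqrt_sq (norm_nonneg _)).symm
    _ ≤ Real.sqrt (‖z - u‖ ^ 2) := Real.sqrt_le_sqrt hsq
    _ = ‖z - u‖ := Real.sqrt_sq (norm_nonneg _)

lemma grad_ineq {E : Type*} [NormedAddCommGroup E] [InnerProductSpace ℝ E] [CompleteSpace E]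
    {f : E → ℝ} {V : Set E} (hf : ConvexOn ℝ V f)
    {U : Set E} (hU : IsOpen U) (hVU : V ⊆ U)
    (hdiff : ∀ x ∈ U, DifferentiableAt ℝ f x)
    {x u : E} (hx : x ∈ V) (hu : u ∈ V) :
    ⟪gradient f x, u - x⟫ ≤ f u - f x := by
  set d : ℝ := ⟪gradient f x, u - x⟫ with hd
  have hgx : HasGradientAt f (gradient f x) x := (hdiff x (hVU hx)).hasGradientAt
  have hF : HasFDerivAt f (InnerProductSpace.toDual ℝ E (gradient f x)) x :=
    hasGradientAt_iff_hasFDerivAt.mp hgx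
  have hc : HasDerivAt (fun s : ℝ => x + s • (u - x)) (u - x) 0 := by
    simpa using ((hasDerivAt_id (0:ℝ)).smul_const (u - x)).const_add x
  have hF' : HasFDerivAt f (InnerProductSpace.toDual ℝ E (gradient f x))
      (x + (0:ℝ) • (u - x)) := by simpa using hF
  have hφ : HasDerivAt (fun s : ℝ => f (x + s • (u - x))) d 0 := by
    have := hF'.comp_hasDerivAt 0 hc
    exact this.congr_deriv (by rw [hd, InnerProductSpace.toDual_apply_apply])
  set φ : ℝ → ℝ := fun s => f (x + s • (u - x)) with hφdef
  have htend : Filter.Tendsto (slope φ 0) (nhdsWithin 0 (Set.Ioi 0)) (nhds d) :=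
    (hasDerivAt_iff_tendsto_slope.mp hφ).mono_left
      (nhdsWithin_mono 0 (fun s hs => ne_of_gt hs))
  have hev : ∀ᶠ s in nhdsWithin (0:ℝ) (Set.Ioi 0), slope φ 0 s ≤ f u - f x := by
    filter_upwards [Ioc_mem_nhdsGT_of_mem (Set.mem_Ico.mpr ⟨le_refl (0:ℝ), one_pos⟩)]
      with s hs
    obtain ⟨hs0, hs1⟩ := hs
    have hmem : x + s • (u - x) = (1 - s) • x + s • u := by
      rw [sub_smul, smul_sub]; module
    have hcvx : f ((1 - s) • x + s • u) ≤ (1 - s) * f x + s * f u :=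
      hf.2 hx hu (by linarith) (le_of_lt hs0) (by ring)
    rw [slope_def_field]
    have hφ0 : φ 0 = f x := by simp [hφdef]
    have hφs : φ s ≤ (1 - s) * f x + s * f u := by rw [hφdef]; simp only []; rw [hmem]; exact hcvx
    rw [hφ0, sub_zero, div_le_iff₀ hs0]
    nlinarith
  exact le_of_tendsto htend hev


set_option maxHeartbeats 2000000
theorem stmt15 {n : ℕ} (V : Set (EuclideanSpace ℝ (Fin n)))
    (hVne : V.Nonempty) (hVcl : IsClosed V) (hVconv : Convex ℝ V)
    (K : ℝ) (hK : ∀ u ∈ V, ∀ v ∈ V, ‖u - v‖ ≤ K)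
    (T : ℕ) (ℓ : ℕ → EuclideanSpace ℝ (Fin n) → ℝ)
    (G : ℝ) (hG : 0 < G)
    (hconv : ∀ t ∈ Finset.Icc 1 T, ConvexOn ℝ V (ℓ t))
    (hdiff : ∀ t ∈ Finset.Icc 1 T, ∃ U : Set (EuclideanSpace ℝ (Fin n)),
      IsOpen U ∧ V ⊆ U ∧ ∀ x ∈ U, DifferentiableAt ℝ (ℓ t) x)
    (hgrad : ∀ t ∈ Finset.Icc 1 T, ∀ x ∈ V, ‖gradient (ℓ t) x‖ ≤ G)
    (proj : EuclideanSpace ℝ (Fin n) → EuclideanSpace ℝ (Fin n))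
    (hproj : ∀ z, proj z ∈ V ∧ ∀ v ∈ V, ‖z - proj z‖ ≤ ‖z - v‖)
    (w : ℕ → EuclideanSpace ℝ (Fin n)) (hw1 : w 1 ∈ V)
    (hiter : ∀ t ∈ Finset.Icc 1 T,
      w (t + 1) = proj (w t - (K / (G * Real.sqrt t)) • gradient (ℓ t) (w t))) :
    ∀ u ∈ V, ∑ t ∈ Finset.Icc 1 T, (ℓ t (w t) - ℓ t u)
      ≤ (3 / 2) * G * K * Real.sqrt T := by
  intro u hu
  -- w t ∈ V for all relevant t
  have hwV : ∀ t : ℕ, t ≤ T + 1 → 1 ≤ t → w t ∈ V := by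
    intro t
    induction t with
    | zero => intro _ h; omega
    | succ s ih =>
      intro hle _
      rcases Nat.eq_zero_or_pos s with hs | hs
      · subst hs; exact hw1
      · rw [hiter s (Finset.mem_Icc.mpr ⟨hs, by omega⟩)]
        exact (hproj _).1
  have hK0 : 0 ≤ K := le_trans (norm_nonneg _) (hK u hu u hu)
  rcases eq_or_lt_of_le hK0 with hKeq | hKpos
  · -- K = 0 : all points of V coincide
    have hall : ∀ t ∈ Finset.Icc 1 T, ℓ t (w t) - ℓ t u = 0 := by
      intro t ht
      have htm := Finset.mem_Icc.mp ht
      have hwt : w t ∈ V := hwV t (by omega) htm.1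
      have : w t = u := by
        have := hK (w t) hwt u hu
        rw [← hKeq] at this
        have := le_antisymm this (norm_nonneg _)
        rwa [norm_sub_eq_zero_iff] at this
      rw [this]; ring
    rw [Finset.sum_congr rfl hall, Finset.sum_const_zero, ← hKeq]
    have : (0:ℝ) ≤ Real.sqrt T := Real.sqrt_nonneg _
    nlinarith
  -- main case K > 0
  have main : ∀ S : ℕ, S ≤ T → w (S+1) ∈ V ∧
      (∑ t ∈ Finset.Icc 1 S, (ℓ t (w t) - ℓ t u))
        + (G * Real.sqrt S / (2*K)) * ‖w (S+1) - u‖^2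
      ≤ (G * Real.sqrt S / (2*K)) * K^2
        + (G*K/2) * ∑ t ∈ Finset.Icc 1 S, 1 / Real.sqrt t := by
    intro S
    induction S with
    | zero => intro _; refine ⟨hw1, ?_⟩; simp
    | succ S ih =>
      intro hS
      obtain ⟨hwS, ihineq⟩ := ih (Nat.le_of_succ_le hS)
      have ht : S + 1 ∈ Finset.Icc 1 T := Finset.mem_Icc.mpr ⟨by omega, hS⟩
      set g := gradient (ℓ (S+1)) (w (S+1)) with hg
      set η : ℝ := K / (G * Real.sqrt ((S+1 : ℕ) : ℝ)) with hηdef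
      set z := w (S+1) - η • g with hz0
      have hsqp : (0:ℝ) < Real.sqrt ((S+1:ℕ):ℝ) := Real.sqrt_pos.mpr (by positivity)
      have hη : 0 < η := div_pos hKpos (mul_pos hG hsqp)
      have hw2 : w (S+1+1) = proj z := hiter (S+1) ht
      have hw2V : w (S+1+1) ∈ V := by rw [hw2]; exact (hproj z).1
      refine ⟨hw2V, ?_⟩
      have hnonexp : ‖w (S+1+1) - u‖ ≤ ‖z - u‖ := by
        rw [hw2]; exact proj_nonexpand hVconv hproj z hu
      have ha2 : ‖w (S+1+1) - u‖^2 ≤ ‖z - u‖^2 :=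
        pow_le_pow_left₀ (norm_nonneg _) hnonexp 2
      have hzexp : ‖z - u‖^2
          = ‖w (S+1) - u‖^2 - 2*η*⟪g, w (S+1) - u⟫ + η^2 * ‖g‖^2 := by
        have h1 : z - u = (w (S+1) - u) - η • g := by rw [hz0]; abel
        rw [h1, @norm_sub_sq_real (EuclideanSpace ℝ (Fin n)) _ _,
          real_inner_smul_right, norm_smul, real_inner_comm]
        rw [Real.norm_eq_abs, abs_of_pos hη]
        ring
      have hgradle : ℓ (S+1) (w (S+1)) - ℓ (S+1) u ≤ ⟪g, w (S+1) - u⟫ := by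
        obtain ⟨U, hUopen, hVU, hUdiff⟩ := hdiff (S+1) ht
        have h := grad_ineq (hconv (S+1) ht) hUopen hVU hUdiff hwS hu
        have h2 : ⟪g, w (S+1) - u⟫ = - ⟪g, u - w (S+1)⟫ := by
          rw [← inner_neg_right]; congr 1; abel
        rw [h2]; linarith
      have hgnorm : ‖g‖ ≤ G := hgrad (S+1) ht _ hwS
      have hg2 : ‖g‖^2 ≤ G^2 := by nlinarith [norm_nonneg g]
      have key2 : 2*η*(ℓ (S+1) (w (S+1)) - ℓ (S+1) u)
          ≤ ‖w (S+1) - u‖^2 - ‖w (S+1+1) - u‖^2 + η^2 * G^2 := by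
        have h5 := mul_le_mul_of_nonneg_left hgradle (by positivity : (0:ℝ) ≤ 2*η)
        have h6 := mul_le_mul_of_nonneg_left hg2 (sq_nonneg η)
        linarith
      -- convert to per-step bound with B (S+1)
      set BS : ℝ := G * Real.sqrt (S : ℕ) / (2*K) with hBS
      set BS1 : ℝ := G * Real.sqrt ((S+1:ℕ):ℝ) / (2*K) with hBS1
      have hprod : 2 * η * BS1 = 1 := by
        rw [hηdef, hBS1]
        field_simp
      have hηG : η * G^2 = G * K * (1 / Real.sqrt ((S+1:ℕ):ℝ)) := by
        rw [hηdef]; field_simp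
      have hBS1pos : 0 < BS1 := by positivity
      have hterm : ℓ (S+1) (w (S+1)) - ℓ (S+1) u
          ≤ BS1 * ‖w (S+1) - u‖^2 - BS1 * ‖w (S+1+1) - u‖^2
            + (G*K/2) * (1 / Real.sqrt ((S+1:ℕ):ℝ)) := by
        have := mul_le_mul_of_nonneg_left key2 (le_of_lt hBS1pos)
        have hrw : BS1 * (2*η*(ℓ (S+1) (w (S+1)) - ℓ (S+1) u))
            = ℓ (S+1) (w (S+1)) - ℓ (S+1) u := by
          rw [show BS1 * (2*η*(ℓ (S+1) (w (S+1)) - ℓ (S+1) u))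
            = (2*η*BS1) * (ℓ (S+1) (w (S+1)) - ℓ (S+1) u) by ring, hprod, one_mul]
        have hrw2 : BS1 * (η^2 * G^2) = (G*K/2) * (1 / Real.sqrt ((S+1:ℕ):ℝ)) := by
          rw [show BS1 * (η^2 * G^2) = (2*η*BS1) * (η * G^2) / 2 by ring, hprod, hηG]
          ring
        have hdist : BS1 * (‖w (S+1) - u‖^2 - ‖w (S+1+1) - u‖^2 + η^2 * G^2)
            = BS1 * ‖w (S+1) - u‖^2 - BS1 * ‖w (S+1+1) - u‖^2 + BS1 * (η^2 * G^2) := by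
          ring
        linarith [this, hrw, hrw2, hdist]
      have hBmono : BS ≤ BS1 := by
        rw [hBS, hBS1]
        have hss := Real.sqrt_le_sqrt (show ((S:ℕ):ℝ) ≤ ((S+1:ℕ):ℝ) by push_cast; linarith)
        gcongr
      have haK : ‖w (S+1) - u‖^2 ≤ K^2 := by
        have h0 := hK (w (S+1)) hwS u hu
        nlinarith [norm_nonneg (w (S+1) - u)]
      have haux : BS1 * ‖w (S+1) - u‖^2 - BS * ‖w (S+1) - u‖^2
          ≤ BS1 * K^2 - BS * K^2 := by
        nlinarith [mul_nonneg (sub_nonneg.mpr hBmono) (sub_nonneg.mpr haK)]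
      rw [Finset.sum_Icc_succ_top (show 1 ≤ S+1 by omega),
        Finset.sum_Icc_succ_top (show 1 ≤ S+1 by omega)]
      have hdist2 : (G*K/2) * ((∑ t ∈ Finset.Icc 1 S, 1 / Real.sqrt t)
            + 1 / Real.sqrt ((S+1:ℕ):ℝ))
          = (G*K/2) * (∑ t ∈ Finset.Icc 1 S, 1 / Real.sqrt t)
            + (G*K/2) * (1 / Real.sqrt ((S+1:ℕ):ℝ)) := by ring
      linarith [ihineq, hterm, haux, hdist2]
  obtain ⟨hwT1, hineq⟩ := main T le_rfl
  have hsum := sum_one_div_sqrt_le T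
  have h1 : 0 ≤ (G * Real.sqrt T / (2*K)) * ‖w (T+1) - u‖^2 := by positivity
  have h2 : (G * Real.sqrt (T:ℕ) / (2*K)) * K^2 = G * K * Real.sqrt (T:ℕ) / 2 := by
    field_simp
  have h3 := mul_le_mul_of_nonneg_left hsum (by positivity : (0:ℝ) ≤ G*K/2)
  have h4 : G*K/2 * (2*Real.sqrt (T:ℕ)) = G*K*Real.sqrt (T:ℕ) := by ring
  linarith [hineq, h1, h2, h3, h4]
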